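/- Let M be a finite-dimensional Hausdorff smooth manifold without boundary and 𝓕 a singular foliation on M. Then every element of the global hull is an infinitesimal symmetry of 𝓕: for every X ∈ 𝓕̂ and every W ∈ 𝓕, the Lie bracket [X,W] belongs to 𝓕. -/

import Mathlib

open scoped Manifold Topology
open Set

noncomputable section

variable (E : Type*) [NormedAddCommGroup E] [NormedSpace ℝ E]
  (M : Type*) [TopologicalSpace M] [ChartedSpace E M]
  [IsManifold 𝓘(ℝ, E) (⊤ : ℕ∞) M]

/-- A smooth vector field on a manifold `M` modeled on the normed space `E`
(all tangent spaces being canonically identified with `E`). -/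
def IsSmoothVectorField (V : M → E) : Prop :=
  ContMDiff 𝓘(ℝ, E) 𝓘(ℝ, E).tangent (⊤ : ℕ∞)
    (fun x => (⟨x, V x⟩ : TangentBundle 𝓘(ℝ, E) M))

/-- The Lie bracket of two vector fields on `M`, computed in the preferred chart around
each point: pull both fields back to the model space `E` via the extended chart, take the
Lie bracket of vector fields there, and push the result back to `M` by the inverse chart. -/
def mLieBracket (V W : M → E) : M → E := fun x₀ =>
  let c := extChartAt 𝓘(ℝ, E) x₀
  let pb : (M → E) → E → E := fun U y => mfderiv 𝓘(ℝ, E) 𝓘(ℝ, E) c (c.symm y) (U (c.symm y))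
  mfderiv 𝓘(ℝ, E) 𝓘(ℝ, E) c.symm (c x₀)
    (show E from VectorField.lieBracket ℝ (pb V) (pb W) (c x₀))

/-- A singular foliation on `M`: a `C^∞(M)`-submodule of the compactly supported smooth
vector fields on `M` which is involutive and locally finitely generated. -/
structure SingularFoliation where
  carrier : Set (M → E)
  smooth_mem : ∀ V ∈ carrier, IsSmoothVectorField E M V
  compactSupport_mem : ∀ V ∈ carrier, HasCompactSupport V
  zero_mem : (fun _ => (0 : E)) ∈ carrier
  add_mem : ∀ V ∈ carrier, ∀ W ∈ carrier, (fun x => V x + W x) ∈ carrier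
  smul_mem : ∀ f : M → ℝ, ContMDiff 𝓘(ℝ, E) 𝓘(ℝ, ℝ) (⊤ : ℕ∞) f →
    ∀ V ∈ carrier, (fun x => f x • V x) ∈ carrier
  involutive : ∀ V ∈ carrier, ∀ W ∈ carrier, mLieBracket E M V W ∈ carrier
  locally_finitely_generated : ∀ p : M, ∃ U : Set M, IsOpen U ∧ p ∈ U ∧
    ∃ (k : ℕ) (Y : Fin k → M → E),
      (∀ i, ContMDiffOn 𝓘(ℝ, E) 𝓘(ℝ, E).tangent (⊤ : ℕ∞)
        (fun x => (⟨x, Y i x⟩ : TangentBundle 𝓘(ℝ, E) M)) U) ∧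
      {Z | Z ∈ carrier ∧ tsupport Z ⊆ U} =
        {Z | ∃ f : Fin k → M → ℝ,
          (∀ i, ContMDiff 𝓘(ℝ, E) 𝓘(ℝ, ℝ) (⊤ : ℕ∞) (f i) ∧ HasCompactSupport (f i) ∧
            tsupport (f i) ⊆ U) ∧
          Z = fun x => ∑ i, f i x • Y i x}

variable {E M}

/-- Membership in the global hull `𝓕̂` of a singular foliation: a smooth vector field `X`
such that `f • X ∈ 𝓕` for every compactly supported smooth function `f`. -/
def SingularFoliation.MemGlobalHull (F : SingularFoliation E M) (X : M → E) : Prop :=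
  IsSmoothVectorField E M X ∧
    ∀ f : M → ℝ, ContMDiff 𝓘(ℝ, E) 𝓘(ℝ, ℝ) (⊤ : ℕ∞) f → HasCompactSupport f →
      (fun x => f x • X x) ∈ F.carrier


section Aux

variable {E : Type*} [NormedAddCommGroup E] [NormedSpace ℝ E]
  {M : Type*} [TopologicalSpace M] [ChartedSpace E M]
  [IsManifold 𝓘(ℝ, E) (⊤ : ℕ∞) M]

/-- `mLieBracket` only depends on the germ of the first vector field. -/
lemma mLieBracket_congr_left {V V' W : M → E} {x₀ : M} (h : V =ᶠ[𝓝 x₀] V') :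
    mLieBracket E M V W x₀ = mLieBracket E M V' W x₀ := by
  simp only [mLieBracket]
  have hc : ContinuousAt (extChartAt 𝓘(ℝ, E) x₀).symm (extChartAt 𝓘(ℝ, E) x₀ x₀) :=
    continuousAt_extChartAt_symm x₀
  have h' : (extChartAt 𝓘(ℝ, E) x₀).symm ⁻¹' {x | V x = V' x}
      ∈ 𝓝 (extChartAt 𝓘(ℝ, E) x₀ x₀) := by
    apply hc.preimage_mem_nhds
    rw [extChartAt_to_inv]
    exact h
  have key : VectorField.lieBracket ℝ
        (fun y => mfderiv 𝓘(ℝ, E) 𝓘(ℝ, E) (extChartAt 𝓘(ℝ, E) x₀)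
          ((extChartAt 𝓘(ℝ, E) x₀).symm y) (V ((extChartAt 𝓘(ℝ, E) x₀).symm y)))
        (fun y => mfderiv 𝓘(ℝ, E) 𝓘(ℝ, E) (extChartAt 𝓘(ℝ, E) x₀)
          ((extChartAt 𝓘(ℝ, E) x₀).symm y) (W ((extChartAt 𝓘(ℝ, E) x₀).symm y)))
        (extChartAt 𝓘(ℝ, E) x₀ x₀)
      = VectorField.lieBracket ℝ
        (fun y => mfderiv 𝓘(ℝ, E) 𝓘(ℝ, E) (extChartAt 𝓘(ℝ, E) x₀)
          ((extChartAt 𝓘(ℝ, E) x₀).symm y) (V' ((extChartAt 𝓘(ℝ, E) x₀).symm y)))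
        (fun y => mfderiv 𝓘(ℝ, E) 𝓘(ℝ, E) (extChartAt 𝓘(ℝ, E) x₀)
          ((extChartAt 𝓘(ℝ, E) x₀).symm y) (W ((extChartAt 𝓘(ℝ, E) x₀).symm y)))
        (extChartAt 𝓘(ℝ, E) x₀ x₀) := by
    apply Filter.EventuallyEq.lieBracket_vectorField_eq _ Filter.EventuallyEq.rfl
    filter_upwards [h'] with y hy
    rw [show V ((extChartAt 𝓘(ℝ, E) x₀).symm y) = V' ((extChartAt 𝓘(ℝ, E) x₀).symm y) from hy]
  rw [key]

/-- `mLieBracket` vanishes at points where the second vector field vanishes locally. -/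
lemma mLieBracket_eq_zero_of_right {V W : M → E} {x₀ : M} (h : W =ᶠ[𝓝 x₀] fun _ => 0) :
    mLieBracket E M V W x₀ = 0 := by
  simp only [mLieBracket]
  have hc : ContinuousAt (extChartAt 𝓘(ℝ, E) x₀).symm (extChartAt 𝓘(ℝ, E) x₀ x₀) :=
    continuousAt_extChartAt_symm x₀
  have h' : (extChartAt 𝓘(ℝ, E) x₀).symm ⁻¹' {x | W x = 0}
      ∈ 𝓝 (extChartAt 𝓘(ℝ, E) x₀ x₀) := by
    apply hc.preimage_mem_nhds
    rw [extChartAt_to_inv]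
    exact h
  have hW0 : (fun y => mfderiv 𝓘(ℝ, E) 𝓘(ℝ, E) (extChartAt 𝓘(ℝ, E) x₀)
        ((extChartAt 𝓘(ℝ, E) x₀).symm y) (W ((extChartAt 𝓘(ℝ, E) x₀).symm y)))
      =ᶠ[𝓝 (extChartAt 𝓘(ℝ, E) x₀ x₀)] fun _ => (0 : E) := by
    filter_upwards [h'] with y hy
    rw [show W ((extChartAt 𝓘(ℝ, E) x₀).symm y) = 0 from hy]
    exact map_zero _
  have key : VectorField.lieBracket ℝ
        (fun y => mfderiv 𝓘(ℝ, E) 𝓘(ℝ, E) (extChartAt 𝓘(ℝ, E) x₀)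
          ((extChartAt 𝓘(ℝ, E) x₀).symm y) (V ((extChartAt 𝓘(ℝ, E) x₀).symm y)))
        (fun y => mfderiv 𝓘(ℝ, E) 𝓘(ℝ, E) (extChartAt 𝓘(ℝ, E) x₀)
          ((extChartAt 𝓘(ℝ, E) x₀).symm y) (W ((extChartAt 𝓘(ℝ, E) x₀).symm y)))
        (extChartAt 𝓘(ℝ, E) x₀ x₀) = 0 := by
    refine (Filter.EventuallyEq.lieBracket_vectorField_eq Filter.EventuallyEq.rfl hW0).trans ?_
    simp [VectorField.lieBracket]
    rfl
  rw [key]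
  exact map_zero _

/-- Existence of a smooth compactly supported function equal to `1` on a neighbourhood of a
compact set, on a finite-dimensional Hausdorff manifold. -/
lemma exists_smooth_one_nhds_of_isCompact [FiniteDimensional ℝ E] [T2Space M]
    {K : Set M} (hK : IsCompact K) :
    ∃ f : M → ℝ, ContMDiff 𝓘(ℝ, E) 𝓘(ℝ, ℝ) (⊤ : ℕ∞) f ∧ HasCompactSupport f ∧
      ∃ U : Set M, IsOpen U ∧ K ⊆ U ∧ EqOn f 1 U := by
  classical
  have hg : ∀ x : M, ∃ g : M → ℝ, ContMDiff 𝓘(ℝ, E) 𝓘(ℝ, ℝ) (⊤ : ℕ∞) g ∧ HasCompactSupport g ∧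
      interior {y | g y = 1} ∈ 𝓝 x := by
    intro x
    obtain ⟨b⟩ : Nonempty (SmoothBumpFunction 𝓘(ℝ, E) x) := inferInstance
    refine ⟨b, b.contMDiff, b.hasCompactSupport, ?_⟩
    refine interior_mem_nhds.2 ?_
    filter_upwards [b.eventuallyEq_one] with y hy using hy
  choose g g_smooth g_supp g_one using hg
  obtain ⟨t, -, ht⟩ := hK.elim_nhds_subcover (fun x => interior {y | g x y = 1})
    (fun x _ => g_one x)
  refine ⟨fun y => 1 - ∏ x ∈ t, (1 - g x y), ?_, ?_,
    ⋃ x ∈ t, interior {y | g x y = 1}, ?_, ht, ?_⟩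
  · apply ContMDiff.sub contMDiff_const
    apply contMDiff_finset_prod
    intro x _
    exact ContMDiff.sub contMDiff_const (g_smooth x)
  · apply HasCompactSupport.intro (t.isCompact_biUnion (fun x _ => (g_supp x)))
    intro y hy
    simp only [mem_iUnion, not_exists] at hy
    have : ∀ x ∈ t, (1 : ℝ) - g x y = 1 := by
      intro x hx
      have : g x y = 0 := by
        have := hy x hx
        by_contra h
        exact this (subset_tsupport _ h)
      simp [this]
    rw [Finset.prod_congr rfl this]
    simp
  · exact isOpen_biUnion fun x _ => isOpen_interior
  · intro y hy
    simp only [mem_iUnion] at hy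
    obtain ⟨x, hx, hxy⟩ := hy
    have h1 : g x y = 1 := by
      have h2 : y ∈ {y | g x y = 1} := interior_subset (s := {y | g x y = 1}) hxy
      exact h2
    have h0 : ∏ z ∈ t, (1 - g z y) = 0 :=
      Finset.prod_eq_zero hx (by simp [h1])
    simp [h0, Pi.one_apply]

end Aux

/-- Every element of the global hull `𝓕̂` of a singular foliation `𝓕` is an
infinitesimal symmetry of `𝓕`: `[X, W] ∈ 𝓕` for all `X ∈ 𝓕̂` and `W ∈ 𝓕`. -/
theorem globalHull_infinitesimal_symmetry
    {E : Type*} [NormedAddCommGroup E] [NormedSpace ℝ E] [FiniteDimensional ℝ E]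
    {M : Type*} [TopologicalSpace M] [ChartedSpace E M]
    [IsManifold 𝓘(ℝ, E) (⊤ : ℕ∞) M] [T2Space M]
    (F : SingularFoliation E M)
    (X : M → E) (hX : F.MemGlobalHull X)
    (W : M → E) (hW : W ∈ F.carrier) :
    mLieBracket E M X W ∈ F.carrier := by
  classical
  obtain ⟨f, f_smooth, f_supp, U, U_open, hKU, f_one⟩ :=
    exists_smooth_one_nhds_of_isCompact (E := E) (M := M) (K := tsupport W)
      (F.compactSupport_mem W hW)
  have hfX : (fun x => f x • X x) ∈ F.carrier := hX.2 f f_smooth f_supp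
  have hbr : mLieBracket E M (fun x => f x • X x) W ∈ F.carrier :=
    F.involutive _ hfX W hW
  have heq : mLieBracket E M X W = mLieBracket E M (fun x => f x • X x) W := by
    funext x₀
    by_cases hx : x₀ ∈ U
    · apply mLieBracket_congr_left
      filter_upwards [U_open.mem_nhds hx] with y hy
      have : f y = 1 := f_one hy
      simp [this]
    · have hW0 : W =ᶠ[𝓝 x₀] fun _ => 0 := by
        have hx' : x₀ ∉ tsupport W := fun h => hx (hKU h)
        have : IsOpen (tsupport W)ᶜ := (isClosed_tsupport W).isOpen_compl
        filter_upwards [this.mem_nhds hx'] with y hy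
        exact image_eq_zero_of_notMem_tsupport hy
      rw [mLieBracket_eq_zero_of_right hW0, mLieBracket_eq_zero_of_right hW0]
  rw [heq]
  exact hbr
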